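/- Let X and Y be complex Hilbert spaces, T : X → Y a bounded linear operator, y ∈ Y, and x† ∈ X an element of the orthogonal complement of the kernel of T satisfying T*T x† = T*y. For each α > 0 let x_α be the unique solution of (T*T + αI)x_α = T*y. Then ‖x† − x_α‖ → 0 as α → 0⁺. -/

import Mathlib

open ContinuousLinearMap Filter Topology

theorem tikhonov_convergence
    {X Y : Type*} [NormedAddCommGroup X] [InnerProductSpace ℂ X] [CompleteSpace X]
    [NormedAddCommGroup Y] [InnerProductSpace ℂ Y] [CompleteSpace Y]
    (T : X →L[ℂ] Y) (y : Y) (xdag : X)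
    (hxdag_mem : xdag ∈ (LinearMap.ker (T : X →ₗ[ℂ] Y))ᗮ)
    (hxdag : (adjoint T ∘L T) xdag = adjoint T y)
    (xa : ℝ → X)
    (hxa : ∀ α > (0 : ℝ), (adjoint T ∘L T) (xa α) + α • xa α = adjoint T y) :
    Tendsto (fun α => ‖xdag - xa α‖) (𝓝[>] (0 : ℝ)) (𝓝 0) := by
  -- ker T = (range T*)ᗮ
  have hker : LinearMap.ker (T : X →ₗ[ℂ] Y) = (LinearMap.range (adjoint T : Y →ₗ[ℂ] X))ᗮ := by
    ext x
    constructor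
    · intro hx u hu
      obtain ⟨v, rfl⟩ := hu
      rw [ContinuousLinearMap.coe_coe, ContinuousLinearMap.adjoint_inner_left]
      simp [show T x = 0 from LinearMap.mem_ker.mp hx]
    · intro hx
      have h := hx (adjoint T (T x)) ⟨T x, rfl⟩
      rw [ContinuousLinearMap.adjoint_inner_left, inner_self_eq_zero] at h
      exact LinearMap.mem_ker.mpr h
  have hclos : xdag ∈ closure ((LinearMap.range (adjoint T : Y →ₗ[ℂ] X) : Submodule ℂ X) : Set X) := by
    have h2 : (LinearMap.ker (T : X →ₗ[ℂ] Y))ᗮ = (LinearMap.range (adjoint T : Y →ₗ[ℂ] X)).topologicalClosure := by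
      rw [hker, Submodule.orthogonal_orthogonal_eq_closure]
    rw [h2] at hxdag_mem
    exact hxdag_mem
  -- key estimate for each α and each approximant
  have key : ∀ α > (0 : ℝ), ∀ w : Y, ∀ ε : ℝ, ‖xdag - adjoint T w‖ ≤ ε →
      ‖xdag - xa α‖ ^ 2 ≤ α * ‖w‖ ^ 2 + ε ^ 2 := by
    intro α hα w ε hε
    set e := xdag - xa α with he
    have heq : (adjoint T ∘L T) e + α • e = α • xdag := by
      have h1 := hxa α hα
      have : (adjoint T ∘L T) e = (adjoint T ∘L T) xdag - (adjoint T ∘L T) (xa α) := by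
        rw [he, map_sub]
      rw [this, hxdag, ← h1]
      module
    -- inner with e
    have hinner : ‖T e‖ ^ 2 + α * ‖e‖ ^ 2 = α * (inner ℂ xdag e : ℂ).re := by
      have hs : ∀ z : X, (inner ℂ ((α:ℝ) • z) e : ℂ) = (α:ℂ) * inner ℂ z e := by
        intro z
        rw [show (α:ℝ) • z = (α:ℂ) • z by simp, inner_smul_left]
        simp [Complex.conj_ofReal]
      have h2 : (inner ℂ ((adjoint T ∘L T) e + α • e) e : ℂ) = α * inner ℂ xdag e := by
        rw [heq, hs]
      rw [inner_add_left, hs] at h2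
      have h3 : (inner ℂ ((adjoint T ∘L T) e) e : ℂ) = inner ℂ (T e) (T e) := by
        simp only [ContinuousLinearMap.coe_comp', Function.comp_apply]
        rw [ContinuousLinearMap.adjoint_inner_left]
      rw [h3] at h2
      have h4 := congrArg Complex.re h2
      simp only [Complex.add_re, Complex.mul_re, Complex.ofReal_re, Complex.ofReal_im,
        zero_mul, sub_zero] at h4
      have hTe : (inner ℂ (T e) (T e) : ℂ).re = ‖T e‖ ^ 2 := by
        rw [← RCLike.re_to_complex]; exact inner_self_eq_norm_sq (T e)
      have hee : (inner ℂ e e : ℂ).re = ‖e‖ ^ 2 := by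
        rw [← RCLike.re_to_complex]; exact inner_self_eq_norm_sq e
      rw [hTe, hee] at h4
      linarith
    -- split inner product
    have hsplit : (inner ℂ xdag e : ℂ).re ≤ ‖w‖ * ‖T e‖ + ε * ‖e‖ := by
      have hx : (inner ℂ xdag e : ℂ) = inner ℂ (xdag - adjoint T w) e + inner ℂ w (T e) := by
        rw [← ContinuousLinearMap.adjoint_inner_left, ← inner_add_left]
        rw [sub_add_cancel]
      rw [hx, Complex.add_re]
      have hreX : ∀ a b : X, (inner ℂ a b : ℂ).re ≤ ‖a‖ * ‖b‖ := fun a b =>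
        le_trans (Complex.re_le_norm _) (norm_inner_le_norm a b)
      have hreY : ∀ a b : Y, (inner ℂ a b : ℂ).re ≤ ‖a‖ * ‖b‖ := fun a b =>
        le_trans (Complex.re_le_norm _) (norm_inner_le_norm a b)
      have h1 : (inner ℂ (xdag - adjoint T w) e : ℂ).re ≤ ε * ‖e‖ := by
        calc (inner ℂ (xdag - adjoint T w) e : ℂ).re ≤ ‖xdag - adjoint T w‖ * ‖e‖ := hreX _ _
          _ ≤ ε * ‖e‖ := by gcongr
      have h2 : (inner ℂ w (T e) : ℂ).re ≤ ‖w‖ * ‖T e‖ := hreY _ _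
      linarith
    have hbound : ‖T e‖ ^ 2 + α * ‖e‖ ^ 2 ≤ α * (‖w‖ * ‖T e‖ + ε * ‖e‖) := by
      rw [hinner]
      have : (0:ℝ) < α := hα
      nlinarith [hsplit]
    nlinarith [sq_nonneg (‖T e‖ - α * ‖w‖), sq_nonneg (‖e‖ - ε), hα]
  -- conclude
  rw [Metric.tendsto_nhdsWithin_nhds]
  intro εf hεf
  -- pick approximant within εf/2
  obtain ⟨x', hx'mem, hx'dist⟩ := Metric.mem_closure_iff.mp hclos (εf / 2) (by linarith)
  obtain ⟨w, rfl⟩ := hx'mem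
  refine ⟨εf ^ 2 / (4 * (‖w‖ ^ 2 + 1)), by positivity, ?_⟩
  intro α hαmem hαdist
  have hα : (0:ℝ) < α := hαmem
  have hαlt : α < εf ^ 2 / (4 * (‖w‖ ^ 2 + 1)) := by
    rw [Real.dist_eq, sub_zero, abs_of_pos hα] at hαdist
    exact hαdist
  have hkey := key α hα w (εf / 2) (by
    rw [dist_eq_norm] at hx'dist
    exact le_of_lt hx'dist)
  rw [Real.dist_eq, sub_zero, abs_of_nonneg (norm_nonneg _)]
  have hw1 : (0:ℝ) < ‖w‖ ^ 2 + 1 := by positivity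
  have h1 : α * ‖w‖ ^ 2 < εf ^ 2 / 4 := by
    rw [lt_div_iff₀ (by positivity : (0:ℝ) < 4 * (‖w‖ ^ 2 + 1))] at hαlt
    nlinarith [sq_nonneg ‖w‖, hα]
  have h2 : ‖xdag - xa α‖ ^ 2 < εf ^ 2 / 4 + (εf/2)^2 := by linarith
  have h3 : ‖xdag - xa α‖ ^ 2 < εf ^ 2 := by nlinarith
  nlinarith [norm_nonneg (xdag - xa α), hεf]
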